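/- arXiv:1405.3817 — 2 statements merged into one kernel-verified Lean document; each statement's English description precedes it below -/
import Mathlib

section
/- For every real p with 1/2 ≤ p ≤ 1, min{p² − p + 1, (2/3)(−p² + p + 1)} ≤ 4/5, with equality if and only if p = φ/√5 where φ = (1+√5)/2. -/
theorem stmt_1 (p : ℝ) (hp : 1 / 2 ≤ p ∧ p ≤ 1) :
    min (p ^ 2 - p + 1) ((2 / 3) * (-p ^ 2 + p + 1)) ≤ 4 / 5 ∧
    (min (p ^ 2 - p + 1) ((2 / 3) * (-p ^ 2 + p + 1)) = 4 / 5 ↔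
      p = ((1 + Real.sqrt 5) / 2) / Real.sqrt 5) := by
  obtain ⟨hp1, hp2⟩ := hp
  have hs2 : Real.sqrt 5 ^ 2 = 5 := Real.sq_sqrt (by norm_num)
  set s := Real.sqrt 5 with hsdef
  have hspos : 0 < s := Real.sqrt_pos.mpr (by norm_num)
  constructor
  · rcases le_total (p ^ 2 - p + 1 / 5) 0 with h | h
    · exact le_trans (min_le_left _ _) (by linarith)
    · exact le_trans (min_le_right _ _) (by linarith)
  · constructor
    · intro h
      have h1 : (4 : ℝ) / 5 ≤ p ^ 2 - p + 1 := h ▸ min_le_left _ _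
      have h2 : (4 : ℝ) / 5 ≤ (2 / 3) * (-p ^ 2 + p + 1) := h ▸ min_le_right _ _
      have hz : p ^ 2 - p + 1 / 5 = 0 := by linarith
      have hsq : (2 * p - 1 - s / 5) * (2 * p - 1 + s / 5) = 0 := by nlinarith
      have hpos : 0 < 2 * p - 1 + s / 5 := by linarith [hspos]
      have : 2 * p - 1 - s / 5 = 0 := by
        rcases mul_eq_zero.mp hsq with h' | h'
        · exact h'
        · linarith
      field_simp
      nlinarith
    · intro h
      have hps : p = (5 + s) / 10 := by
        rw [h]; field_simp; nlinarith
      have hf : p ^ 2 - p + 1 = 4 / 5 := by rw [hps]; nlinarith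
      have hg : (2 / 3) * (-p ^ 2 + p + 1) = 4 / 5 := by rw [hps]; nlinarith
      rw [hf, hg, min_self]
end

section
/- Let k ≥ 2 be an integer and C = (2√k − 2)/(2√k − 1). For all real z, z − 1 + (1−C)(k − z)(k − z + 1) ≥ Ck, with equality at z = k − √k + 1. -/
theorem stmt_15 (k : ℕ) (hk : 2 ≤ k) (C : ℝ)
    (hC : C = (2 * Real.sqrt k - 2) / (2 * Real.sqrt k - 1)) :
    (∀ z : ℝ, z - 1 + (1 - C) * ((k : ℝ) - z) * ((k : ℝ) - z + 1) ≥ C * k) ∧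
    ((k : ℝ) - Real.sqrt k + 1) - 1 +
      (1 - C) * ((k : ℝ) - ((k : ℝ) - Real.sqrt k + 1)) *
        ((k : ℝ) - ((k : ℝ) - Real.sqrt k + 1) + 1) = C * k := by
  set s := Real.sqrt k with hs
  have hk1 : (1:ℝ) ≤ (k:ℝ) := by exact_mod_cast Nat.one_le_of_lt hk
  have hs0 : 0 ≤ s := Real.sqrt_nonneg _
  have hs2 : s ^ 2 = (k:ℝ) := Real.sq_sqrt (by linarith)
  have hs1 : 1 ≤ s := by nlinarith [sq_nonneg (s - 1)]
  have hpos : 0 < 2 * s - 1 := by linarith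
  have hne : 2 * s - 1 ≠ 0 := ne_of_gt hpos
  constructor
  · intro z
    rw [hC, ge_iff_le, ← sub_nonneg]
    have h : z - 1 + (1 - (2 * s - 2) / (2 * s - 1)) * ((k : ℝ) - z) * ((k : ℝ) - z + 1)
        - (2 * s - 2) / (2 * s - 1) * k = (z - ((k:ℝ) - s + 1))^2 / (2 * s - 1) := by
      field_simp
      ring_nf
      nlinarith [hs2, sq_nonneg z]
    rw [h]
    positivity
  · rw [hC]
    field_simp
    ring_nf
    have hi : (-1 + s * 2) * (-1 + s * 2)⁻¹ = 1 := mul_inv_cancel₀ (by linarith)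
    rw [← hs2]
    linear_combination (-2 * s * (s - 1)) * hi
end
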